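/- Let n ≥ 1. For every integer k with 0 ≤ k ≤ n − 1, the number of Dyck vectors ν ∈ ℕ^n with ν_1 + ⋯ + ν_n = k equals ((n−k)/(n+k))·binom(n+k,k) (an integer, equal to binom(n+k,k) − binom(n+k,k−1)); and for k ≥ n this number is 0. -/

import Mathlib

/-- A vector `ν ∈ ℕ^n` is Dyck if `ν₁ + ⋯ + νᵢ ≤ i - 1` for all `1 ≤ i ≤ n`
(0-indexed: the sum of the entries up to index `i` is at most `i`). -/
def IsDyck {n : ℕ} (ν : Fin n → ℕ) : Prop :=
  ∀ i : Fin n, (∑ j ∈ Finset.univ.filter (fun j => j ≤ i), ν j) ≤ (i : ℕ)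

instance {n : ℕ} (ν : Fin n → ℕ) : Decidable (IsDyck ν) :=
  inferInstanceAs (Decidable (∀ i : Fin n, _ ≤ _))

noncomputable def DyckS (n k : ℕ) : Finset (Fin n → ℕ) :=
  (Finset.Nat.antidiagonalTuple n k).filter (fun ν => IsDyck ν)

lemma mem_DyckS {n k : ℕ} {ν : Fin n → ℕ} :
    ν ∈ DyckS n k ↔ IsDyck ν ∧ ∑ i, ν i = k := by
  simp [DyckS, Finset.Nat.mem_antidiagonalTuple, and_comm]

lemma filter_le_castSucc {n : ℕ} (i : Fin n) :
    (Finset.univ.filter (fun j => j ≤ i.castSucc) : Finset (Fin (n+1))) =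
      (Finset.univ.filter (fun j => j ≤ i)).image Fin.castSucc := by
  ext j
  simp only [Finset.mem_filter, Finset.mem_image, Finset.mem_univ, true_and]
  constructor
  · intro hj
    have hj' : (j : ℕ) ≤ (i : ℕ) := hj
    refine ⟨⟨(j : ℕ), lt_of_le_of_lt hj' i.isLt⟩, ?_, ?_⟩
    · exact hj'
    · ext; simp
  · rintro ⟨j', hj', rfl⟩
    exact hj'

lemma sum_filter_castSucc {n : ℕ} (ν : Fin (n+1) → ℕ) (i : Fin n) :
    (∑ j ∈ Finset.univ.filter (fun j => j ≤ i.castSucc), ν j) =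
      ∑ j ∈ Finset.univ.filter (fun j => j ≤ i), ν j.castSucc := by
  rw [filter_le_castSucc, Finset.sum_image (by intros a _ b _ h; exact Fin.castSucc_injective n h)]

lemma isDyck_snoc_iff {n : ℕ} (ν : Fin n → ℕ) (m : ℕ) :
    IsDyck (Fin.snoc ν m) ↔ IsDyck ν ∧ (∑ i, ν i) + m ≤ n := by
  constructor
  · intro h
    constructor
    · intro i
      have := h i.castSucc
      rw [sum_filter_castSucc] at this
      simpa [Fin.snoc_castSucc] using this
    · have := h (Fin.last n)
      have huniv : (Finset.univ.filter (fun j => j ≤ Fin.last n)) = (Finset.univ : Finset (Fin (n+1))) := by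
        ext j; simp [Fin.le_last]
      rw [huniv] at this
      simpa [Fin.sum_univ_castSucc, Fin.snoc_castSucc, Fin.snoc_last] using this
  · rintro ⟨h1, h2⟩ i
    induction i using Fin.lastCases with
    | last =>
      have huniv : (Finset.univ.filter (fun j => j ≤ Fin.last n)) = (Finset.univ : Finset (Fin (n+1))) := by
        ext j; simp [Fin.le_last]
      rw [huniv]
      simpa [Fin.sum_univ_castSucc, Fin.snoc_castSucc, Fin.snoc_last] using h2
    | cast i =>
      rw [sum_filter_castSucc]
      simpa [Fin.snoc_castSucc] using h1 i

lemma DyckS_eq_empty {n k : ℕ} (hn : 1 ≤ n) (hk : n ≤ k) : DyckS n k = ∅ := by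
  ext ν
  simp only [Finset.notMem_empty, iff_false, mem_DyckS]
  rintro ⟨hd, hs⟩
  have := hd ⟨n - 1, by omega⟩
  have huniv : (Finset.univ.filter (fun j => j ≤ (⟨n-1, by omega⟩ : Fin n))) = (Finset.univ : Finset (Fin n)) := by
    ext j; simp only [Finset.mem_filter, Finset.mem_univ, true_and, iff_true]
    exact Fin.le_def.mpr (by have := j.isLt; simp only []; omega)
  rw [huniv, hs] at this
  simp only at this
  omega

lemma DyckS_zero (n : ℕ) : (DyckS n 0).card = 1 := by
  have : DyckS n 0 = {fun _ => 0} := by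
    ext ν
    simp only [mem_DyckS, Finset.mem_singleton]
    constructor
    · rintro ⟨-, hs⟩
      funext i
      exact Finset.sum_eq_zero_iff.mp hs i (Finset.mem_univ i)
    · rintro rfl
      exact ⟨fun i => by simp, by simp⟩
  rw [this, Finset.card_singleton]


lemma DyckS_card_succ {n k : ℕ} (hk : k ≤ n) :
    (DyckS (n+1) k).card = ∑ j ∈ Finset.range (k+1), (DyckS n j).card := by
  rw [← Finset.card_sigma]
  refine Finset.card_nbij'
    (fun ν => (⟨∑ i, ν (Fin.castSucc i), fun i => ν (Fin.castSucc i)⟩ : (_ : ℕ) × (Fin n → ℕ)))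
    (fun p => Fin.snoc p.2 (k - p.1)) ?_ ?_ ?_ ?_
  · intro ν hν
    rw [Finset.mem_coe, mem_DyckS] at hν
    obtain ⟨hd, hs⟩ := hν
    rw [Fin.sum_univ_castSucc] at hs
    simp only [Finset.mem_coe, Finset.mem_sigma, Finset.mem_range, mem_DyckS]
    refine ⟨by omega, fun i => ?_, trivial⟩
    have := hd i.castSucc
    rw [sum_filter_castSucc] at this
    simpa using this
  · intro p hp
    rw [Finset.mem_coe, Finset.mem_sigma, Finset.mem_range] at hp
    obtain ⟨h1, h2⟩ := hp
    rw [mem_DyckS] at h2; rw [Finset.mem_coe, mem_DyckS]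
    obtain ⟨hd, hs⟩ := h2
    refine ⟨(isDyck_snoc_iff _ _).mpr ⟨hd, by omega⟩, ?_⟩
    rw [Fin.sum_univ_castSucc]
    simp only [Fin.snoc_castSucc, Fin.snoc_last, hs]
    omega
  · intro ν hν
    rw [Finset.mem_coe, mem_DyckS] at hν
    obtain ⟨hd, hs⟩ := hν
    rw [Fin.sum_univ_castSucc] at hs
    funext i
    induction i using Fin.lastCases with
    | last => simp only [Fin.snoc_last]; omega
    | cast i => simp
  · rintro ⟨j, w⟩ hp
    simp only [Finset.mem_coe, Finset.mem_sigma, Finset.mem_range, mem_DyckS] at hp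
    obtain ⟨h1, hd, hs⟩ := hp
    have e1 : (fun i => (Fin.snoc w (k - j) : Fin (n+1) → ℕ) (Fin.castSucc i)) = w := by
      funext i; simp
    refine Sigma.ext ?_ ?_
    · simp [hs]
    · simpa using heq_of_eq e1

lemma choose_hockey (m : ℕ) : ∀ K : ℕ, ∑ j ∈ Finset.range (K+1), (m + j).choose j = (m + K + 1).choose K := by
  intro K
  induction K with
  | zero => simp
  | succ K ih =>
    rw [Finset.sum_range_succ, ih]
    rw [show m + (K+1) + 1 = (m + K + 1) + 1 from rfl, Nat.choose_succ_succ]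
    rfl

lemma dyck_card_pos : ∀ n : ℕ, ∀ k : ℕ, k ≤ n →
    (DyckS (n+1) (k+1)).card + (n+k+1).choose k = (n+k+1).choose (k+1) := by
  intro n
  induction n with
  | zero =>
    intro k hk
    obtain rfl : k = 0 := by omega
    rw [DyckS_eq_empty (by omega) (by omega)]
    simp
  | succ n ih =>
    intro k hk
    by_cases hkn : k ≤ n
    · rw [DyckS_card_succ (by omega), Finset.sum_range_succ', DyckS_zero]
      have hterm : ∑ j ∈ Finset.range (k+1), (DyckS (n+1) (j+1)).card
          + ∑ j ∈ Finset.range (k+1), (n+j+1).choose j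
          = ∑ j ∈ Finset.range (k+1), (n+j+1).choose (j+1) := by
        rw [← Finset.sum_add_distrib]
        exact Finset.sum_congr rfl (fun j hj => ih j (by
          simp only [Finset.mem_range] at hj; omega))
      have hA : ∑ j ∈ Finset.range (k+1), (n+j+1).choose j = (n+k+2).choose k := by
        have h := choose_hockey (n+1) k
        calc ∑ j ∈ Finset.range (k+1), (n+j+1).choose j
            = ∑ j ∈ Finset.range (k+1), (n+1+j).choose j :=
              Finset.sum_congr rfl (fun j _ => by congr 1; omega)
          _ = (n+1+k+1).choose k := h
          _ = (n+k+2).choose k := by congr 1; omega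
      have hB : (∑ j ∈ Finset.range (k+1), (n+j+1).choose (j+1)) + 1 = (n+k+2).choose (k+1) := by
        have h := choose_hockey n (k+1)
        rw [Finset.sum_range_succ'] at h
        have hs2 : ∑ j ∈ Finset.range (k+1), (n+(j+1)).choose (j+1)
            = ∑ j ∈ Finset.range (k+1), (n+j+1).choose (j+1) :=
          Finset.sum_congr rfl (fun j _ => rfl)
        have e2 : (n+(k+1)+1).choose (k+1) = (n+k+2).choose (k+1) := rfl
        simp only [Nat.add_zero, Nat.choose_zero_right] at h
        omega
      rw [show n+1+k+1 = n+k+2 from by omega]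
      omega
    · obtain rfl : k = n+1 := by omega
      rw [DyckS_eq_empty (by omega) (by omega), Finset.card_empty,
        show n+1+(n+1)+1 = 2*n+3 from by omega, Nat.zero_add]
      rw [← Nat.choose_symm (by omega : n+2 ≤ 2*n+3)]
      congr 1
      omega

theorem stmt9 (n : ℕ) (hn : 1 ≤ n) (k : ℕ) :
    {ν : Fin n → ℕ | IsDyck ν ∧ ∑ i, ν i = k}.Finite ∧
    (k ≤ n - 1 →
      (({ν : Fin n → ℕ | IsDyck ν ∧ ∑ i, ν i = k}.ncard : ℚ) =
        ((n : ℚ) - k) / ((n : ℚ) + k) * ((n + k).choose k : ℚ))) ∧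
    (n ≤ k → {ν : Fin n → ℕ | IsDyck ν ∧ ∑ i, ν i = k}.ncard = 0) := by
  have hset : {ν : Fin n → ℕ | IsDyck ν ∧ ∑ i, ν i = k} = ↑(DyckS n k) := by
    ext ν; simp [mem_DyckS]
  have hcard : {ν : Fin n → ℕ | IsDyck ν ∧ ∑ i, ν i = k}.ncard = (DyckS n k).card := by
    rw [hset, Set.ncard_coe_finset]
  refine ⟨by rw [hset]; exact (DyckS n k).finite_toSet, ?_, ?_⟩
  · intro hk
    rw [hcard]
    clear hset hcard
    obtain ⟨n', rfl⟩ : ∃ n', n = n' + 1 := ⟨n - 1, by omega⟩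
    rcases k with _ | k'
    · rw [DyckS_zero]
      have hne : ((n' : ℚ) + 1) ≠ 0 := by positivity
      push_cast
      rw [Nat.choose_zero_right]
      push_cast
      field_simp
      ring
    · have hk2 : k' ≤ n' := by omega
      have h := dyck_card_pos n' k' hk2
      have key2 := Nat.choose_succ_right_eq (n'+k'+1) k'
      rw [show n'+k'+1-k' = n'+1 from by omega] at key2
      have pas := Nat.choose_succ_succ (n'+k'+1) k'
      have H := congrArg (Nat.cast : ℕ → ℚ) h
      have K := congrArg (Nat.cast : ℕ → ℚ) key2
      have P := congrArg (Nat.cast : ℕ → ℚ) pas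
      push_cast at H K P
      have hB : (((n'+1 : ℕ) : ℚ)) + (((k'+1 : ℕ) : ℚ)) ≠ 0 := by positivity
      rw [div_mul_eq_mul_div, eq_div_iff hB]
      have egoal : (n'+1) + (k'+1) = n'+k'+2 := by omega
      rw [egoal]
      push_cast
      linear_combination ((n' : ℚ) + k' + 2) * H + ((k' : ℚ) - n') * P + 2 * K
  · intro hnk
    rw [hcard, DyckS_eq_empty hn hnk, Finset.card_empty]
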